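/- Let A ∈ GL₂(ℤ) be Anosov (no complex eigenvalue of A has absolute value 1), let G = ℤ² ⋊_A ℤ, and let v ∈ ℤ² be a nonzero vector. Then the infinite cyclic subgroup generated by (v, 0) is exponentially distorted in G, i.e. its distortion function in G is equivalent to n ↦ 2ⁿ. -/

import Mathlib

/-- The word length of `g` with respect to a generating set `S`: the least `n ≥ 0`
such that `g` is a product of `n` elements of `S ∪ S⁻¹`. -/
noncomputable def wordLength {G : Type*} [Group G] (S : Set G) (g : G) : ℕ :=
  sInf {n : ℕ | ∃ l : List G, (∀ x ∈ l, x ∈ S ∨ x⁻¹ ∈ S) ∧ l.length = n ∧ l.prod = g}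


/-- The distortion function of the subgroup generated by `A` inside the group
generated by `S`: `n ↦ max { |g|_A : g ∈ ⟨A⟩, |g|_S ≤ n }`. -/
noncomputable def distortion {G : Type*} [Group G] (S A : Set G) (n : ℕ) : ℕ :=
  sSup {m : ℕ | ∃ g ∈ Subgroup.closure A, wordLength A g = m ∧ wordLength S g ≤ n}

/-- `f` is dominated by `g`: there are positive constants `A, B, C, D, E` with
`f(x) ≤ A·g(Bx + C) + Dx + E` for all `x`. -/
def DominatedN (f g : ℕ → ℕ) : Prop :=
  ∃ A B C D E : ℕ, 0 < A ∧ 0 < B ∧ 0 < C ∧ 0 < D ∧ 0 < E ∧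
    ∀ n, f n ≤ A * g (B * n + C) + D * n + E

/-- Equivalence of nondecreasing functions: mutual domination. -/
def EquivN (f g : ℕ → ℕ) : Prop := DominatedN f g ∧ DominatedN g f


/-- The additive automorphism of `ℤ²` given by a matrix `A ∈ GL₂(ℤ)`. -/
noncomputable def glAddAut (A : GL (Fin 2) ℤ) : AddAut (Fin 2 → ℤ) where
  toFun v := (A : Matrix (Fin 2) (Fin 2) ℤ).mulVec v
  invFun v := ((A⁻¹ : GL (Fin 2) ℤ) : Matrix (Fin 2) (Fin 2) ℤ).mulVec v
  left_inv v := by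
    dsimp only
    rw [Matrix.mulVec_mulVec, ← Matrix.GeneralLinearGroup.coe_mul, inv_mul_cancel,
      Matrix.GeneralLinearGroup.coe_one, Matrix.one_mulVec]
  right_inv v := by
    dsimp only
    rw [Matrix.mulVec_mulVec, ← Matrix.GeneralLinearGroup.coe_mul, mul_inv_cancel,
      Matrix.GeneralLinearGroup.coe_one, Matrix.one_mulVec]
  map_add' u v := by simp [Matrix.mulVec_add]

/-- The action of the `ℤ` factor on `ℤ²`, sending the generator `1 ∈ ℤ` to `A`. -/
noncomputable def solHom (A : GL (Fin 2) ℤ) :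
    Multiplicative ℤ →* MulAut (Multiplicative (Fin 2 → ℤ)) :=
  zpowersHom _ (AddEquiv.toMultiplicative (glAddAut A))

/-- The semidirect product `ℤ² ⋊_A ℤ`. -/
abbrev SolGroup (A : GL (Fin 2) ℤ) :=
  Multiplicative (Fin 2 → ℤ) ⋊[solHom A] Multiplicative ℤ

/-- The fiber subgroup `ℤ² × {0}` of `ℤ² ⋊_A ℤ`. -/
noncomputable def fiberSubgroup (A : GL (Fin 2) ℤ) : Subgroup (SolGroup A) :=
  (SemidirectProduct.inl : Multiplicative (Fin 2 → ℤ) →* SolGroup A).range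

/-- `A ∈ GL₂(ℤ)` is Anosov if no complex eigenvalue of `A` (i.e. no complex root of
its characteristic polynomial) has absolute value `1`. -/
def IsAnosov (A : GL (Fin 2) ℤ) : Prop :=
  ∀ z : ℂ, ((A : Matrix (Fin 2) (Fin 2) ℤ).map (Int.cast : ℤ → ℂ)).charpoly.IsRoot z →
    ‖z‖ ≠ 1

/-! ### Auxiliary word-length API -/

section WordAPI
variable {G : Type*} [Group G] {S : Set G}

def IsWord (S : Set G) (l : List G) : Prop := ∀ x ∈ l, x ∈ S ∨ x⁻¹ ∈ S

lemma wordLength_le {g : G} {l : List G} (hl : IsWord S l) (hp : l.prod = g) :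
    wordLength S g ≤ l.length := Nat.sInf_le ⟨l, hl, rfl, hp⟩

lemma exists_word_of_mem_closure {g : G} (hg : g ∈ Subgroup.closure S) :
    ∃ l : List G, IsWord S l ∧ l.prod = g := by
  have hg' : g ∈ Submonoid.closure (S ∪ S⁻¹) := by
    have := Subgroup.closure_toSubmonoid S
    rw [← Subgroup.mem_toSubmonoid, this] at hg; exact hg
  obtain ⟨l, hl, hp⟩ := Submonoid.exists_list_of_mem_closure hg'
  exact ⟨l, fun x hx => by rcases hl x hx with h | h; exact Or.inl h; exact Or.inr h, hp⟩

lemma exists_min_word {g : G} (hg : g ∈ Subgroup.closure S) :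
    ∃ l : List G, IsWord S l ∧ l.prod = g ∧ l.length = wordLength S g := by
  obtain ⟨l, hl, hp⟩ := exists_word_of_mem_closure hg
  have hne : {n : ℕ | ∃ l : List G, (∀ x ∈ l, x ∈ S ∨ x⁻¹ ∈ S) ∧ l.length = n ∧ l.prod = g}.Nonempty :=
    ⟨l.length, l, hl, rfl, hp⟩
  obtain ⟨l', h1, h2, h3⟩ := Nat.sInf_mem hne
  exact ⟨l', h1, h3, h2⟩

lemma isWord_append {l1 l2 : List G} (h1 : IsWord S l1) (h2 : IsWord S l2) :
    IsWord S (l1 ++ l2) := by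
  intro x hx
  rcases List.mem_append.mp hx with h | h
  · exact h1 x h
  · exact h2 x h

def invWord (l : List G) : List G := (l.map (·⁻¹)).reverse

lemma isWord_invWord {l : List G} (hl : IsWord S l) : IsWord S (invWord l) := by
  intro x hx
  simp only [invWord, List.mem_reverse, List.mem_map] at hx
  obtain ⟨y, hy, rfl⟩ := hx
  rcases hl y hy with h | h
  · exact Or.inr (by simpa using h)
  · exact Or.inl h

lemma prod_invWord (l : List G) : (invWord l).prod = l.prod⁻¹ := by
  rw [invWord, List.prod_inv_reverse]

lemma length_invWord (l : List G) : (invWord l).length = l.length := by simp [invWord]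

def powWord (k : ℕ) (l : List G) : List G := (List.replicate k l).flatten

lemma isWord_powWord {l : List G} (hl : IsWord S l) (k : ℕ) : IsWord S (powWord k l) := by
  intro x hx
  simp only [powWord, List.mem_flatten] at hx
  obtain ⟨l', hl', hx⟩ := hx
  rw [List.eq_of_mem_replicate hl'] at hx
  exact hl x hx

lemma prod_powWord (k : ℕ) (l : List G) : (powWord k l).prod = l.prod ^ k := by
  induction k with
  | zero => simp [powWord]
  | succ n ih =>
    rw [powWord, List.replicate_succ] at *
    rw [List.flatten_cons, List.prod_append, ih, pow_succ']

lemma length_powWord (k : ℕ) (l : List G) : (powWord k l).length = k * l.length := by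
  induction k with
  | zero => simp [powWord]
  | succ n ih =>
    rw [powWord, List.replicate_succ] at *
    rw [List.flatten_cons, List.length_append, ih]; ring

def zpowWord (k : ℤ) (l : List G) : List G :=
  if 0 ≤ k then powWord k.natAbs l else invWord (powWord k.natAbs l)

lemma isWord_zpowWord {l : List G} (hl : IsWord S l) (k : ℤ) : IsWord S (zpowWord k l) := by
  unfold zpowWord; split
  · exact isWord_powWord hl _
  · exact isWord_invWord (isWord_powWord hl _)

lemma prod_zpowWord (k : ℤ) (l : List G) : (zpowWord k l).prod = l.prod ^ k := by
  unfold zpowWord; split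
  · rename_i h
    rw [prod_powWord, ← zpow_natCast, Int.natAbs_of_nonneg h]
  · rename_i h
    rw [prod_invWord, prod_powWord, ← zpow_natCast]
    rw [← zpow_neg]
    congr 1
    omega

lemma length_zpowWord (k : ℤ) (l : List G) : (zpowWord k l).length = k.natAbs * l.length := by
  unfold zpowWord; split <;> simp [length_invWord, length_powWord]

end WordAPI

/-! ### Norms and matrix bounds -/

def n1 (w : Fin 2 → ℤ) : ℕ := (w 0).natAbs + (w 1).natAbs

lemma n1_add_le (u w : Fin 2 → ℤ) : n1 (u + w) ≤ n1 u + n1 w := by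
  have h0 := Int.natAbs_add_le (u 0) (w 0)
  have h1 := Int.natAbs_add_le (u 1) (w 1)
  simp only [n1, Pi.add_apply]
  omega

lemma n1_smul (k : ℤ) (w : Fin 2 → ℤ) : n1 (k • w) = k.natAbs * n1 w := by
  simp [n1, Int.natAbs_mul, mul_add]

def msum (M : Matrix (Fin 2) (Fin 2) ℤ) : ℕ :=
  (M 0 0).natAbs + (M 0 1).natAbs + (M 1 0).natAbs + (M 1 1).natAbs

lemma n1_mulVec_le (M : Matrix (Fin 2) (Fin 2) ℤ) (w : Fin 2 → ℤ) :
    n1 (M.mulVec w) ≤ msum M * n1 w := by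
  have h0 : (M.mulVec w) 0 = M 0 0 * w 0 + M 0 1 * w 1 := by
    simp [Matrix.mulVec, dotProduct, Fin.sum_univ_two]
  have h1 : (M.mulVec w) 1 = M 1 0 * w 0 + M 1 1 * w 1 := by
    simp [Matrix.mulVec, dotProduct, Fin.sum_univ_two]
  have b0 := Int.natAbs_add_le (M 0 0 * w 0) (M 0 1 * w 1)
  have b1 := Int.natAbs_add_le (M 1 0 * w 0) (M 1 1 * w 1)
  rw [Int.natAbs_mul, Int.natAbs_mul] at b0 b1
  calc n1 (M.mulVec w) = (M.mulVec w 0).natAbs + (M.mulVec w 1).natAbs := rfl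
    _ ≤ (M 0 0).natAbs * (w 0).natAbs + (M 0 1).natAbs * (w 1).natAbs
        + ((M 1 0).natAbs * (w 0).natAbs + (M 1 1).natAbs * (w 1).natAbs) := by
        rw [h0, h1]; exact Nat.add_le_add b0 b1
    _ ≤ msum M * n1 w := by
        simp only [msum, n1]
        nlinarith [Nat.zero_le ((M 0 0).natAbs * (w 1).natAbs),
          Nat.zero_le ((M 0 1).natAbs * (w 0).natAbs),
          Nat.zero_le ((M 1 0).natAbs * (w 1).natAbs),
          Nat.zero_le ((M 1 1).natAbs * (w 0).natAbs)]

noncomputable def Kc (A : GL (Fin 2) ℤ) : ℕ :=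
  msum (A : Matrix (Fin 2) (Fin 2) ℤ) + msum ((A⁻¹ : GL (Fin 2) ℤ) : Matrix (Fin 2) (Fin 2) ℤ) + 1

lemma one_le_Kc (A : GL (Fin 2) ℤ) : 1 ≤ Kc A := by simp [Kc]

lemma solHom_apply (A : GL (Fin 2) ℤ) (e : ℤ) (w : Fin 2 → ℤ) :
    solHom A (Multiplicative.ofAdd e) (Multiplicative.ofAdd w)
      = Multiplicative.ofAdd (((A ^ e : GL (Fin 2) ℤ) : Matrix (Fin 2) (Fin 2) ℤ).mulVec w) := by
  have key : ∀ e : ℤ, ∀ w : Fin 2 → ℤ,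
      ((AddEquiv.toMultiplicative (glAddAut A)) ^ e) (Multiplicative.ofAdd w)
        = Multiplicative.ofAdd (((A ^ e : GL (Fin 2) ℤ) : Matrix (Fin 2) (Fin 2) ℤ).mulVec w) := by
    intro e
    induction e using Int.induction_on with
    | zero => intro w; simp
    | succ i ih =>
      intro w
      rw [zpow_add_one, MulAut.mul_apply]
      have hφ : (AddEquiv.toMultiplicative (glAddAut A)) (Multiplicative.ofAdd w)
          = Multiplicative.ofAdd ((A : Matrix (Fin 2) (Fin 2) ℤ).mulVec w) := rfl
      rw [hφ, ih]
      rw [Matrix.mulVec_mulVec, zpow_add_one, Units.val_mul]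
    | pred i ih =>
      intro w
      rw [zpow_sub_one, MulAut.mul_apply]
      have hφ : ((AddEquiv.toMultiplicative (glAddAut A))⁻¹) (Multiplicative.ofAdd w)
          = Multiplicative.ofAdd (((A⁻¹ : GL (Fin 2) ℤ) : Matrix (Fin 2) (Fin 2) ℤ).mulVec w) := rfl
      rw [hφ, ih]
      rw [Matrix.mulVec_mulVec, zpow_sub_one, Units.val_mul]
  have hs : solHom A (Multiplicative.ofAdd e)
      = (AddEquiv.toMultiplicative (glAddAut A)) ^ e := by
    simp [solHom, zpowersHom_apply]
  rw [hs, key]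

lemma n1_glzpow_le (A : GL (Fin 2) ℤ) (e : ℤ) (w : Fin 2 → ℤ) :
    n1 (((A ^ e : GL (Fin 2) ℤ) : Matrix (Fin 2) (Fin 2) ℤ).mulVec w)
      ≤ Kc A ^ e.natAbs * n1 w := by
  induction e using Int.induction_on generalizing w with
  | zero => simp
  | succ i ih =>
    have he : (A : GL (Fin 2) ℤ) ^ ((i : ℤ) + 1) = A * A ^ (i : ℤ) := by
      rw [add_comm, zpow_add, zpow_one]
    rw [he, Units.val_mul, ← Matrix.mulVec_mulVec]
    calc n1 ((A : Matrix (Fin 2) (Fin 2) ℤ).mulVec (((A ^ (i:ℤ) : GL (Fin 2) ℤ) : Matrix (Fin 2) (Fin 2) ℤ).mulVec w))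
        ≤ msum (A : Matrix (Fin 2) (Fin 2) ℤ) * n1 (((A ^ (i:ℤ) : GL (Fin 2) ℤ) : Matrix (Fin 2) (Fin 2) ℤ).mulVec w) :=
          n1_mulVec_le _ _
      _ ≤ Kc A * (Kc A ^ (i:ℤ).natAbs * n1 w) := by
          exact Nat.mul_le_mul (by simp [Kc]; omega) (ih w)
      _ = Kc A ^ ((i:ℤ).natAbs + 1) * n1 w := by ring
      _ = Kc A ^ ((i:ℤ) + 1).natAbs * n1 w := by
          rw [show ((i:ℤ) + 1).natAbs = (i:ℤ).natAbs + 1 by omega]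
  | pred i ih =>
    have he : (A : GL (Fin 2) ℤ) ^ (-(i : ℤ) - 1) = A⁻¹ * A ^ (-(i : ℤ)) := by
      rw [sub_eq_add_neg, add_comm, zpow_add, zpow_neg_one]
    rw [he, Units.val_mul, ← Matrix.mulVec_mulVec]
    calc n1 (((A⁻¹ : GL (Fin 2) ℤ) : Matrix (Fin 2) (Fin 2) ℤ).mulVec (((A ^ (-(i:ℤ)) : GL (Fin 2) ℤ) : Matrix (Fin 2) (Fin 2) ℤ).mulVec w))
        ≤ msum ((A⁻¹ : GL (Fin 2) ℤ) : Matrix (Fin 2) (Fin 2) ℤ) * n1 (((A ^ (-(i:ℤ)) : GL (Fin 2) ℤ) : Matrix (Fin 2) (Fin 2) ℤ).mulVec w) :=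
          n1_mulVec_le _ _
      _ ≤ Kc A * (Kc A ^ (-(i:ℤ)).natAbs * n1 w) := by
          exact Nat.mul_le_mul (by simp [Kc]; omega) (ih w)
      _ = Kc A ^ ((-(i:ℤ)).natAbs + 1) * n1 w := by ring
      _ = Kc A ^ (-(i:ℤ) - 1).natAbs * n1 w := by
          rw [show (-(i:ℤ) - 1).natAbs = (-(i:ℤ)).natAbs + 1 by omega]

/-! ### Product bounds in the semidirect product -/

lemma prod_bound (A : GL (Fin 2) ℤ) (W R : ℕ) (l : List (SolGroup A))
    (h : ∀ y ∈ l, n1 (Multiplicative.toAdd y.left) ≤ W ∧ (Multiplicative.toAdd y.right).natAbs ≤ R) :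
    n1 (Multiplicative.toAdd (l.prod).left) ≤ l.length * W * Kc A ^ (l.length * R)
      ∧ (Multiplicative.toAdd (l.prod).right).natAbs ≤ l.length * R := by
  induction l with
  | nil => constructor <;> simp [n1]
  | cons y l ih =>
    have hy := h y (List.mem_cons_self)
    obtain ⟨ih1, ih2⟩ := ih (fun z hz => h z (List.mem_cons_of_mem _ hz))
    have hmull : (List.prod (y :: l)).left = y.left * solHom A y.right (l.prod).left := by
      rw [List.prod_cons, SemidirectProduct.mul_left]
    have hmulr : (List.prod (y :: l)).right = y.right * (l.prod).right := by
      rw [List.prod_cons, SemidirectProduct.mul_right]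
    constructor
    · rw [hmull]
      have hsolapp : solHom A y.right (l.prod).left
          = Multiplicative.ofAdd (((A ^ (Multiplicative.toAdd y.right) : GL (Fin 2) ℤ) : Matrix (Fin 2) (Fin 2) ℤ).mulVec (Multiplicative.toAdd (l.prod).left)) := by
        conv_lhs => rw [← ofAdd_toAdd y.right, ← ofAdd_toAdd (l.prod).left]
        rw [solHom_apply]
      rw [hsolapp]
      have htoadd : Multiplicative.toAdd (y.left * Multiplicative.ofAdd (((A ^ (Multiplicative.toAdd y.right) : GL (Fin 2) ℤ) : Matrix (Fin 2) (Fin 2) ℤ).mulVec (Multiplicative.toAdd (l.prod).left)))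
          = Multiplicative.toAdd y.left + ((A ^ (Multiplicative.toAdd y.right) : GL (Fin 2) ℤ) : Matrix (Fin 2) (Fin 2) ℤ).mulVec (Multiplicative.toAdd (l.prod).left) := by
        simp
      rw [htoadd]
      set u := ((A ^ (Multiplicative.toAdd y.right) : GL (Fin 2) ℤ) : Matrix (Fin 2) (Fin 2) ℤ).mulVec (Multiplicative.toAdd (l.prod).left) with hu
      calc n1 (Multiplicative.toAdd y.left + u) ≤ n1 (Multiplicative.toAdd y.left) + n1 u :=
            n1_add_le _ _
        _ ≤ W + Kc A ^ R * (l.length * W * Kc A ^ (l.length * R)) := by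
            apply Nat.add_le_add hy.1
            rw [hu]
            calc n1 (((A ^ (Multiplicative.toAdd y.right) : GL (Fin 2) ℤ) : Matrix (Fin 2) (Fin 2) ℤ).mulVec (Multiplicative.toAdd (l.prod).left))
                ≤ Kc A ^ (Multiplicative.toAdd y.right).natAbs * n1 (Multiplicative.toAdd (l.prod).left) :=
                  n1_glzpow_le A _ _
              _ ≤ Kc A ^ R * (l.length * W * Kc A ^ (l.length * R)) :=
                  Nat.mul_le_mul (Nat.pow_le_pow_right (one_le_Kc A) hy.2) ih1
        _ ≤ (y :: l).length * W * Kc A ^ ((y :: l).length * R) := by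
            rw [List.length_cons]
            rw [show (l.length + 1) * R = l.length * R + R by ring, pow_add]
            have hK1 : 1 ≤ Kc A ^ (l.length * R) := Nat.one_le_pow _ _ (one_le_Kc A)
            have hK2 : 1 ≤ Kc A ^ R := Nat.one_le_pow _ _ (one_le_Kc A)
            have hW' : W ≤ W * (Kc A ^ (l.length * R) * Kc A ^ R) := by
              calc W = W * 1 := (mul_one _).symm
                _ ≤ W * (Kc A ^ (l.length * R) * Kc A ^ R) :=
                    Nat.mul_le_mul_left _ (by calc 1 = 1 * 1 := rfl
                      _ ≤ Kc A ^ (l.length * R) * Kc A ^ R := Nat.mul_le_mul hK1 hK2)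
            calc W + Kc A ^ R * (l.length * W * Kc A ^ (l.length * R))
                = W + l.length * W * (Kc A ^ (l.length * R) * Kc A ^ R) := by ring
              _ ≤ W * (Kc A ^ (l.length * R) * Kc A ^ R)
                  + l.length * W * (Kc A ^ (l.length * R) * Kc A ^ R) :=
                  Nat.add_le_add_right hW' _
              _ = (l.length + 1) * W * (Kc A ^ (l.length * R) * Kc A ^ R) := by ring
    · rw [hmulr]
      have : Multiplicative.toAdd (y.right * (l.prod).right)
          = Multiplicative.toAdd y.right + Multiplicative.toAdd (l.prod).right := by simp
      rw [this, List.length_cons]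
      have htri := Int.natAbs_add_le (Multiplicative.toAdd y.right) (Multiplicative.toAdd (l.prod).right)
      have h2 := hy.2
      calc (Multiplicative.toAdd y.right + Multiplicative.toAdd (l.prod).right).natAbs
          ≤ (Multiplicative.toAdd y.right).natAbs + (Multiplicative.toAdd (l.prod).right).natAbs := htri
        _ ≤ R + l.length * R := Nat.add_le_add h2 ih2
        _ = (l.length + 1) * R := by ring

/-! ### Trace and eigenvalue lemmas -/

lemma eval_charpoly_fin_two (M : Matrix (Fin 2) (Fin 2) ℂ) (z : ℂ) :
    M.charpoly.eval z = z ^ 2 - M.trace * z + M.det := by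
  rw [Matrix.charpoly, Matrix.det_fin_two]
  rw [Matrix.charmatrix_apply_eq, Matrix.charmatrix_apply_eq,
    Matrix.charmatrix_apply_ne _ _ _ (by norm_num), Matrix.charmatrix_apply_ne _ _ _ (by norm_num)]
  simp [Matrix.trace_fin_two, Matrix.det_fin_two]
  ring

lemma units_inv_coe_eq_adjugate (M : GL (Fin 2) ℤ) (hdet : (M : Matrix (Fin 2) (Fin 2) ℤ).det = 1) :
    ((M⁻¹ : GL (Fin 2) ℤ) : Matrix (Fin 2) (Fin 2) ℤ) = (M : Matrix (Fin 2) (Fin 2) ℤ).adjugate := by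
  have h1 : (M : Matrix (Fin 2) (Fin 2) ℤ) * (M : Matrix (Fin 2) (Fin 2) ℤ).adjugate = 1 := by
    rw [Matrix.mul_adjugate, hdet, one_smul]
  have h2 : ((M⁻¹ : GL (Fin 2) ℤ) : Matrix (Fin 2) (Fin 2) ℤ) * (M : Matrix (Fin 2) (Fin 2) ℤ) = 1 := by
    rw [← Units.val_mul, inv_mul_cancel, Units.val_one]
  calc ((M⁻¹ : GL (Fin 2) ℤ) : Matrix (Fin 2) (Fin 2) ℤ)
      = ((M⁻¹ : GL (Fin 2) ℤ) : Matrix (Fin 2) (Fin 2) ℤ)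
        * ((M : Matrix (Fin 2) (Fin 2) ℤ) * (M : Matrix (Fin 2) (Fin 2) ℤ).adjugate) := by
        rw [h1, mul_one]
    _ = (M : Matrix (Fin 2) (Fin 2) ℤ).adjugate := by rw [← mul_assoc, h2, one_mul]

lemma add_adjugate (M : Matrix (Fin 2) (Fin 2) ℤ) : M + M.adjugate = M.trace • 1 := by
  rw [Matrix.adjugate_fin_two]
  ext i j
  fin_cases i <;> fin_cases j <;>
    simp [Matrix.trace_fin_two, Matrix.one_apply] <;> ring

lemma gl_det_pm (M : GL (Fin 2) ℤ) :
    (M : Matrix (Fin 2) (Fin 2) ℤ).det = 1 ∨ (M : Matrix (Fin 2) (Fin 2) ℤ).det = -1 := by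
  have h : (M : Matrix (Fin 2) (Fin 2) ℤ).det * ((M⁻¹ : GL (Fin 2) ℤ) : Matrix (Fin 2) (Fin 2) ℤ).det = 1 := by
    rw [← Matrix.det_mul, ← Units.val_mul, mul_inv_cancel, Units.val_one, Matrix.det_one]
  exact Int.isUnit_iff.mp (IsUnit.of_mul_eq_one _ h)

lemma trace_mul_self (M : Matrix (Fin 2) (Fin 2) ℤ) :
    (M * M).trace = M.trace ^ 2 - 2 * M.det := by
  simp [Matrix.trace_fin_two, Matrix.mul_apply, Fin.sum_univ_two, Matrix.det_fin_two]
  ring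

lemma anosov_trace_sq (A : GL (Fin 2) ℤ) (hAn : IsAnosov A) :
    3 ≤ ((A ^ 2 : GL (Fin 2) ℤ) : Matrix (Fin 2) (Fin 2) ℤ).trace := by
  set M : Matrix (Fin 2) (Fin 2) ℤ := (A : Matrix (Fin 2) (Fin 2) ℤ) with hM
  have hpow : ((A ^ 2 : GL (Fin 2) ℤ) : Matrix (Fin 2) (Fin 2) ℤ) = M * M := by
    rw [pow_two, Units.val_mul]
  rw [hpow, trace_mul_self]
  set t : ℤ := M.trace with ht
  have hroot : ∀ z : ℂ, z ^ 2 - (t : ℂ) * z + (M.det : ℂ) = 0 → ‖z‖ ≠ 1 := by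
    intro z hz
    apply hAn z
    unfold Polynomial.IsRoot
    rw [eval_charpoly_fin_two]
    have htr : (M.map (Int.cast : ℤ → ℂ)).trace = (t : ℂ) := by
      simp [Matrix.trace_fin_two, Matrix.map_apply, ht]
    have hdet : (M.map (Int.cast : ℤ → ℂ)).det = (M.det : ℂ) := by
      simp [Matrix.det_fin_two, Matrix.map_apply]
    rw [htr, hdet, hz]
  rcases gl_det_pm A with hd | hd
  · by_contra hle
    push_neg at hle
    have ht4 : t ^ 2 ≤ 4 := by rw [hd] at hle; omega
    set s : ℝ := Real.sqrt (4 - (t : ℝ) ^ 2) / 2 with hs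
    set z : ℂ := ⟨(t : ℝ) / 2, s⟩ with hz
    have h4 : (0 : ℝ) ≤ 4 - (t : ℝ) ^ 2 := by
      have : ((t ^ 2 : ℤ) : ℝ) ≤ ((4 : ℤ) : ℝ) := by exact_mod_cast ht4
      push_cast at this
      linarith
    have hs2 : s ^ 2 = (4 - (t : ℝ) ^ 2) / 4 := by
      rw [hs, div_pow, Real.sq_sqrt h4]
      norm_num
    have hzroot : z ^ 2 - (t : ℂ) * z + (M.det : ℂ) = 0 := by
      rw [hd]
      apply Complex.ext <;>
        simp [hz, pow_two, Complex.mul_re, Complex.mul_im, Complex.add_re, Complex.add_im] <;>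
        nlinarith [hs2]
    have habs : ‖z‖ = 1 := by
      have hn : Complex.normSq z = 1 := by
        simp [Complex.normSq_apply, hz]
        nlinarith [hs2]
      rw [← Complex.sq_norm] at hn
      nlinarith [norm_nonneg z]
    exact hroot z hzroot habs
  · have htne : t ≠ 0 := by
      intro h0
      apply hroot 1 ?_ (by simp)
      rw [h0, hd]
      push_cast
      ring
    have habs : 1 ≤ |t| := Int.one_le_abs htne
    have : 1 ≤ t ^ 2 := by nlinarith [sq_abs t]
    rw [hd]; nlinarith

lemma det_sq_one (A : GL (Fin 2) ℤ) :
    ((A ^ 2 : GL (Fin 2) ℤ) : Matrix (Fin 2) (Fin 2) ℤ).det = 1 := by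
  have : ((A ^ 2 : GL (Fin 2) ℤ) : Matrix (Fin 2) (Fin 2) ℤ)
      = (A : Matrix (Fin 2) (Fin 2) ℤ) * (A : Matrix (Fin 2) (Fin 2) ℤ) := by
    rw [pow_two, Units.val_mul]
  rw [this, Matrix.det_mul]
  rcases gl_det_pm A with h | h <;> rw [h] <;> norm_num

lemma key_seq (A : GL (Fin 2) ℤ) (hAn : IsAnosov A) (m : ℕ) :
    ∃ t : ℤ, ((((A ^ 2) ^ m : GL (Fin 2) ℤ) : Matrix (Fin 2) (Fin 2) ℤ)
      + ((((A ^ 2)⁻¹) ^ m : GL (Fin 2) ℤ) : Matrix (Fin 2) (Fin 2) ℤ) = t • 1)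
      ∧ 2 * 3 ^ m ≤ t * 2 ^ m := by
  set X : GL (Fin 2) ℤ := A ^ 2 with hX
  set Y : GL (Fin 2) ℤ := (A ^ 2)⁻¹ with hY
  set τ : ℤ := (X : Matrix (Fin 2) (Fin 2) ℤ).trace with hτ
  have hτ3 : 3 ≤ τ := anosov_trace_sq A hAn
  have hXY : (X : Matrix (Fin 2) (Fin 2) ℤ) + (Y : Matrix (Fin 2) (Fin 2) ℤ) = τ • 1 := by
    rw [hY, units_inv_coe_eq_adjugate _ (det_sq_one A), add_adjugate]
  have main : ∀ m : ℕ, ∃ t s : ℤ,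
      (((X ^ m : GL (Fin 2) ℤ) : Matrix (Fin 2) (Fin 2) ℤ)
        + ((Y ^ m : GL (Fin 2) ℤ) : Matrix (Fin 2) (Fin 2) ℤ) = t • 1)
      ∧ (((X ^ (m+1) : GL (Fin 2) ℤ) : Matrix (Fin 2) (Fin 2) ℤ)
        + ((Y ^ (m+1) : GL (Fin 2) ℤ) : Matrix (Fin 2) (Fin 2) ℤ) = s • 1)
      ∧ 2 ≤ t ∧ 3 * t ≤ 2 * s ∧ 2 * 3 ^ m ≤ t * 2 ^ m := by
    intro m
    induction m with
    | zero =>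
      refine ⟨2, τ, ?_, ?_, le_refl _, by linarith, by norm_num⟩
      · simp [two_smul]
      · simpa using hXY
    | succ m ih =>
      obtain ⟨t, s, h1, h2, ht2, hts, hgrow⟩ := ih
      refine ⟨s, τ * s - t, h2, ?_, by linarith, ?_, ?_⟩
      · -- matrix identity for m+2
        have hYX : Y = X⁻¹ := by rw [hX, hY]
        have c1 : X * Y ^ (m + 1) = Y ^ m := by
          rw [hYX, pow_succ', ← mul_assoc, mul_inv_cancel, one_mul]
        have c2 : Y * X ^ (m + 1) = X ^ m := by
          rw [hYX, pow_succ', ← mul_assoc, inv_mul_cancel, one_mul]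
        have c3 : X * X ^ (m + 1) = X ^ (m + 2) := (pow_succ' X (m + 1)).symm
        have c4 : Y * Y ^ (m + 1) = Y ^ (m + 2) := (pow_succ' Y (m + 1)).symm
        have hL : ((X : Matrix (Fin 2) (Fin 2) ℤ) + (Y : Matrix (Fin 2) (Fin 2) ℤ))
            * (((X ^ (m+1) : GL (Fin 2) ℤ) : Matrix (Fin 2) (Fin 2) ℤ)
              + ((Y ^ (m+1) : GL (Fin 2) ℤ) : Matrix (Fin 2) (Fin 2) ℤ))
            = (((X ^ (m+2) : GL (Fin 2) ℤ) : Matrix (Fin 2) (Fin 2) ℤ)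
              + ((Y ^ (m+2) : GL (Fin 2) ℤ) : Matrix (Fin 2) (Fin 2) ℤ))
              + (((X ^ m : GL (Fin 2) ℤ) : Matrix (Fin 2) (Fin 2) ℤ)
              + ((Y ^ m : GL (Fin 2) ℤ) : Matrix (Fin 2) (Fin 2) ℤ)) := by
          rw [mul_add, add_mul, add_mul, ← Units.val_mul, ← Units.val_mul,
            ← Units.val_mul, ← Units.val_mul, c1, c2, c3, c4]
          abel
        have hR : ((X : Matrix (Fin 2) (Fin 2) ℤ) + (Y : Matrix (Fin 2) (Fin 2) ℤ))
            * (((X ^ (m+1) : GL (Fin 2) ℤ) : Matrix (Fin 2) (Fin 2) ℤ)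
              + ((Y ^ (m+1) : GL (Fin 2) ℤ) : Matrix (Fin 2) (Fin 2) ℤ))
            = (τ * s) • (1 : Matrix (Fin 2) (Fin 2) ℤ) := by
          rw [hXY, h2, smul_mul_assoc, one_mul, smul_smul]
        rw [hR] at hL
        have hL' := hL.symm
        rw [h1] at hL'
        have goal : ((X ^ (m+2) : GL (Fin 2) ℤ) : Matrix (Fin 2) (Fin 2) ℤ)
            + ((Y ^ (m+2) : GL (Fin 2) ℤ) : Matrix (Fin 2) (Fin 2) ℤ)
            = (τ * s) • (1 : Matrix (Fin 2) (Fin 2) ℤ) - t • 1 := by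
          rw [eq_sub_iff_add_eq]
          exact hL'
        rw [goal, ← sub_smul]
      · have hs2 : 2 ≤ s := by linarith
        nlinarith [mul_nonneg (by linarith : (0:ℤ) ≤ 2 * τ - 6) (by linarith : (0:ℤ) ≤ s)]
      · have hp : (0:ℤ) < 2 ^ m := by positivity
        rw [pow_succ, pow_succ]
        nlinarith [mul_nonneg (by linarith : (0:ℤ) ≤ 2 * s - 3 * t) (le_of_lt hp)]
  obtain ⟨t, s, h1, _, _, _, hg⟩ := main m
  exact ⟨t, h1, hg⟩

lemma key_elem (A : GL (Fin 2) ℤ) (hAn : IsAnosov A) (m : ℕ) :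
    ∃ t : ℤ, ((((A ^ 2) ^ (2*m) : GL (Fin 2) ℤ) : Matrix (Fin 2) (Fin 2) ℤ)
      + ((((A ^ 2)⁻¹) ^ (2*m) : GL (Fin 2) ℤ) : Matrix (Fin 2) (Fin 2) ℤ) = t • 1)
      ∧ (2:ℤ) ^ (m+1) ≤ t := by
  obtain ⟨t, hid, hg⟩ := key_seq A hAn (2*m)
  refine ⟨t, hid, ?_⟩
  have h1 : (3:ℤ) ^ (2*m) = 9 ^ m := by rw [pow_mul]; norm_num
  have h2 : (2:ℤ) ^ (2*m) = 4 ^ m := by rw [pow_mul]; norm_num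
  rw [h1, h2] at hg
  have h8 : (8:ℤ) ^ m ≤ 9 ^ m := pow_le_pow_left₀ (by norm_num) (by norm_num) m
  have h8' : (8:ℤ) ^ m = 2 ^ m * 4 ^ m := by
    rw [show (8:ℤ) = 2 * 4 by norm_num, mul_pow]
  have h4 : (0:ℤ) < 4 ^ m := by positivity
  have hc : (2 * 2 ^ m) * 4 ^ m ≤ t * 4 ^ m := by
    have : 2 * (2 ^ m * 4 ^ m) ≤ t * 4 ^ m := by rw [← h8']; linarith
    linarith
  have := le_of_mul_le_mul_right hc h4
  calc (2:ℤ) ^ (m+1) = 2 * 2 ^ m := by ring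
    _ ≤ t := this

/-- For `A ∈ GL₂(ℤ)` Anosov and `v ∈ ℤ²` nonzero, the infinite
cyclic subgroup of `G = ℤ² ⋊_A ℤ` generated by `(v, 0)` is exponentially distorted
in `G`: its distortion function is equivalent to `n ↦ 2ⁿ`. -/
theorem cyclic_fiber_subgroup_exponentially_distorted (A : GL (Fin 2) ℤ) (hAn : IsAnosov A)
    (v : Fin 2 → ℤ) (hv : v ≠ 0)
    (S : Finset (SolGroup A)) (hS : Subgroup.closure (S : Set (SolGroup A)) = ⊤)
    (B : Finset (SolGroup A))
    (hB : Subgroup.closure (B : Set (SolGroup A)) =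
      Subgroup.zpowers (SemidirectProduct.inl (Multiplicative.ofAdd v) : SolGroup A)) :
    EquivN (distortion (S : Set (SolGroup A)) (B : Set (SolGroup A))) (fun n => 2 ^ n) := by
  classical
  set x : SolGroup A := SemidirectProduct.inl (Multiplicative.ofAdd v) with hx
  -- powers of x
  have hxk : ∀ k : ℤ, x ^ k = SemidirectProduct.inl (Multiplicative.ofAdd (k • v)) := by
    intro k
    rw [hx, ← map_zpow, ← ofAdd_zsmul]
  have hxinj : ∀ k k' : ℤ, x ^ k = x ^ k' → k = k' := by
    intro k k' h
    rw [hxk, hxk] at h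
    have h2 : k • v = k' • v := by
      have := SemidirectProduct.inl_injective h
      exact Multiplicative.ofAdd.injective this
  -- extract a coordinate where v is nonzero
    obtain ⟨i, hi⟩ := Function.ne_iff.mp hv
    have hi' : v i ≠ 0 := by simpa using hi
    have := congrFun h2 i
    simp only [Pi.smul_apply, smul_eq_mul] at this
    exact mul_right_cancel₀ hi' this
  have hv1 : 1 ≤ n1 v := by
    obtain ⟨i, hi⟩ := Function.ne_iff.mp hv
    have hi' : v i ≠ 0 := by simpa using hi
    fin_cases i <;> simp [n1] at * <;> omega
  -- words in S for everything
  have hSall : ∀ g : SolGroup A, ∃ l, IsWord (↑S) l ∧ l.prod = g := by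
    intro g
    exact exists_word_of_mem_closure (by rw [hS]; trivial)
  obtain ⟨lx, hlxW, hlxP⟩ := hSall x
  set ρ : SolGroup A := SemidirectProduct.inr (Multiplicative.ofAdd (1 : ℤ)) with hρdef
  obtain ⟨lr, hlrW, hlrP⟩ := hSall ρ
  have hρ : ∀ e : ℤ, SemidirectProduct.inr (Multiplicative.ofAdd e) = ρ ^ e := by
    intro e
    rw [hρdef, ← map_zpow, ← ofAdd_zsmul, smul_eq_mul, mul_one]
  -- word in B for x
  have hxB : x ∈ Subgroup.closure (↑B : Set (SolGroup A)) := by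
    rw [hB]; exact Subgroup.mem_zpowers x
  obtain ⟨lb, hlbW, hlbP⟩ := exists_word_of_mem_closure hxB
  -- bounds over S
  set W : ℕ := S.sup (fun s => max (n1 (Multiplicative.toAdd s.left)) (n1 (Multiplicative.toAdd (s⁻¹).left))) with hW
  set R : ℕ := S.sup (fun s => max (Multiplicative.toAdd s.right).natAbs (Multiplicative.toAdd (s⁻¹).right).natAbs) with hR
  have hWR : ∀ y : SolGroup A, (y ∈ (↑S : Set (SolGroup A)) ∨ y⁻¹ ∈ (↑S : Set (SolGroup A))) →
      n1 (Multiplicative.toAdd y.left) ≤ W ∧ (Multiplicative.toAdd y.right).natAbs ≤ R := by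
    intro y hy
    rcases hy with hy | hy
    · have hy' : y ∈ S := hy
      have h1 := Finset.le_sup (f := fun s : SolGroup A => max (n1 (Multiplicative.toAdd s.left)) (n1 (Multiplicative.toAdd (s⁻¹).left))) hy'
      have h2 := Finset.le_sup (f := fun s : SolGroup A => max (Multiplicative.toAdd s.right).natAbs (Multiplicative.toAdd (s⁻¹).right).natAbs) hy'
      exact ⟨le_trans (le_max_left _ _) h1, le_trans (le_max_left _ _) h2⟩
    · have hy' : y⁻¹ ∈ S := hy
      constructor
      · have h := Finset.le_sup (f := fun s : SolGroup A => max (n1 (Multiplicative.toAdd s.left)) (n1 (Multiplicative.toAdd (s⁻¹).left))) hy'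
        simp only [inv_inv] at h
        exact le_trans (le_max_right _ _) h
      · have h := Finset.le_sup (f := fun s : SolGroup A => max (Multiplicative.toAdd s.right).natAbs (Multiplicative.toAdd (s⁻¹).right).natAbs) hy'
        simp only [inv_inv] at h
        exact le_trans (le_max_right _ _) h
  -- the crucial upper bound
  have keyUB : ∀ n : ℕ, ∀ g ∈ Subgroup.closure (↑B : Set (SolGroup A)),
      wordLength (↑S) g ≤ n → wordLength (↑B : Set (SolGroup A)) g ≤ lb.length * (n * W * Kc A ^ (n * R)) := by
    intro n g hgB hgn
    obtain ⟨k, hk⟩ := Subgroup.mem_zpowers_iff.mp (hB ▸ hgB)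
    obtain ⟨l, hlW, hlP, hlL⟩ := exists_min_word (S := (↑S : Set (SolGroup A))) (g := g) (by rw [hS]; trivial)
    have hlen : l.length ≤ n := by rw [hlL]; exact hgn
    have hb := prod_bound A W R l (fun y hy => hWR y (hlW y hy))
    rw [hlP] at hb
    have hmono : l.length * W * Kc A ^ (l.length * R) ≤ n * W * Kc A ^ (n * R) :=
      Nat.mul_le_mul (Nat.mul_le_mul_right _ hlen)
        (Nat.pow_le_pow_right (one_le_Kc A) (Nat.mul_le_mul_right _ hlen))
    have hn1 : n1 (Multiplicative.toAdd g.left) ≤ n * W * Kc A ^ (n * R) := le_trans hb.1 hmono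
    have hkb : k.natAbs ≤ n * W * Kc A ^ (n * R) := by
      have hgl : Multiplicative.toAdd g.left = k • v := by
        rw [← hk, hxk]
        simp [SemidirectProduct.left_inl]
      rw [hgl, n1_smul] at hn1
      calc k.natAbs = k.natAbs * 1 := (mul_one _).symm
        _ ≤ k.natAbs * n1 v := Nat.mul_le_mul_left _ hv1
        _ ≤ _ := hn1
    have hwB : wordLength (↑B : Set (SolGroup A)) g ≤ k.natAbs * lb.length := by
      have hle := wordLength_le (g := g) (l := zpowWord k lb) (isWord_zpowWord hlbW k)
        (by rw [prod_zpowWord, hlbP, hk])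
      rwa [length_zpowWord] at hle
    calc wordLength (↑B : Set (SolGroup A)) g ≤ k.natAbs * lb.length := hwB
      _ ≤ (n * W * Kc A ^ (n * R)) * lb.length := Nat.mul_le_mul_right _ hkb
      _ = lb.length * (n * W * Kc A ^ (n * R)) := by ring
  -- the exponential bound on the upper bound
  set U : ℕ → ℕ := fun n => lb.length * (n * W * Kc A ^ (n * R)) with hU
  have hU2 : ∀ n : ℕ, U n ≤ (lb.length * W + 1) * 2 ^ ((Kc A ^ R + 1) * n + 1) := by
    intro n
    have e1 : Kc A ^ (n * R) = (Kc A ^ R) ^ n := by rw [mul_comm, pow_mul]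
    have e2 : n ≤ 2 ^ n := le_of_lt (Nat.lt_two_pow_self)
    have e3 : (Kc A ^ R) ^ n ≤ 2 ^ (Kc A ^ R * n) := by
      calc (Kc A ^ R) ^ n ≤ (2 ^ (Kc A ^ R)) ^ n :=
            Nat.pow_le_pow_left (le_of_lt Nat.lt_two_pow_self) n
        _ = 2 ^ (Kc A ^ R * n) := by rw [← pow_mul]
    calc U n = lb.length * (n * W * (Kc A ^ R) ^ n) := by rw [hU]; simp only; rw [e1]
      _ ≤ lb.length * (2 ^ n * W * 2 ^ (Kc A ^ R * n)) := by
          apply Nat.mul_le_mul_left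
          exact Nat.mul_le_mul (Nat.mul_le_mul_right _ e2) e3
      _ = lb.length * W * 2 ^ (n + Kc A ^ R * n) := by rw [pow_add]; ring
      _ = lb.length * W * 2 ^ ((Kc A ^ R + 1) * n) := by
          rw [show (Kc A ^ R + 1) * n = n + Kc A ^ R * n by ring]
      _ ≤ (lb.length * W + 1) * 2 ^ ((Kc A ^ R + 1) * n + 1) := by
          rw [pow_succ]
          calc lb.length * W * 2 ^ ((Kc A ^ R + 1) * n)
              ≤ (lb.length * W + 1) * 2 ^ ((Kc A ^ R + 1) * n) :=
                Nat.mul_le_mul_right _ (Nat.le_succ _)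
            _ ≤ (lb.length * W + 1) * (2 ^ ((Kc A ^ R + 1) * n) * 2) := by
                apply Nat.mul_le_mul_left
                omega
  -- boundedness of the distortion set
  have hBdd : ∀ n : ℕ, ∀ m ∈ {m : ℕ | ∃ g ∈ Subgroup.closure (↑B : Set (SolGroup A)),
      wordLength (↑B : Set (SolGroup A)) g = m ∧ wordLength (↑S : Set (SolGroup A)) g ≤ n}, m ≤ U n := by
    rintro n m ⟨g, hg, hm, hn⟩
    rw [← hm]
    exact keyUB n g hg hn
  constructor
  · -- distortion ≼ 2^n
    refine ⟨lb.length * W + 1, Kc A ^ R + 1, 1, 1, 1, by omega, by omega, by omega, by omega, by omega, ?_⟩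
    intro n
    have h1 : distortion (↑S : Set (SolGroup A)) (↑B : Set (SolGroup A)) n
        ≤ (lb.length * W + 1) * 2 ^ ((Kc A ^ R + 1) * n + 1) := by
      apply csSup_le'
      intro m hm
      exact le_trans (hBdd n m hm) (hU2 n)
    calc distortion (↑S : Set (SolGroup A)) (↑B : Set (SolGroup A)) n
        ≤ (lb.length * W + 1) * 2 ^ ((Kc A ^ R + 1) * n + 1) := h1
      _ ≤ (lb.length * W + 1) * 2 ^ ((Kc A ^ R + 1) * n + 1) + 1 * n + 1 := by omega
  · -- 2^n ≼ distortion
    -- exponents of elements of B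
    set kB : SolGroup A → ℤ := fun b => if h : ∃ k : ℤ, x ^ k = b then h.choose else 0 with hkBdef
    have hkB : ∀ b ∈ B, x ^ (kB b) = b := by
      intro b hb
      have hbz : b ∈ Subgroup.zpowers x := by
        rw [← hB]; exact Subgroup.subset_closure hb
      obtain ⟨k, hk⟩ := Subgroup.mem_zpowers_iff.mp hbz
      have hex : ∃ k : ℤ, x ^ k = b := ⟨k, hk⟩
      simp only [hkBdef, dif_pos hex]
      exact hex.choose_spec
    set KB : ℕ := B.sup (fun b => (kB b).natAbs) with hKB
    -- every B-word is a power of x with controlled exponent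
    have hext : ∀ l : List (SolGroup A), IsWord (↑B : Set (SolGroup A)) l →
        ∃ k : ℤ, l.prod = x ^ k ∧ k.natAbs ≤ l.length * KB := by
      intro l hl
      induction l with
      | nil => exact ⟨0, by simp, by simp⟩
      | cons y l ih =>
        obtain ⟨k, hk1, hk2⟩ := ih (fun z hz => hl z (List.mem_cons_of_mem _ hz))
        rcases hl y (List.mem_cons_self) with hy | hy
        · have hy' : y ∈ B := hy
          refine ⟨kB y + k, ?_, ?_⟩
          · rw [List.prod_cons, hk1, zpow_add, hkB y hy']
          · have hsup := Finset.le_sup (f := fun b : SolGroup A => (kB b).natAbs) hy'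
            have htri := Int.natAbs_add_le (kB y) k
            rw [List.length_cons, Nat.succ_mul]
            omega
        · have hy' : y⁻¹ ∈ B := hy
          have hyx : y = x ^ (-(kB y⁻¹)) := by
            rw [zpow_neg, hkB _ hy', inv_inv]
          refine ⟨-(kB y⁻¹) + k, ?_, ?_⟩
          · rw [List.prod_cons, hk1, zpow_add, ← hyx]
          · have hsup := Finset.le_sup (f := fun b : SolGroup A => (kB b).natAbs) hy'
            have htri := Int.natAbs_add_le (-(kB y⁻¹)) k
            rw [Int.natAbs_neg] at htri
            rw [List.length_cons, Nat.succ_mul]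
            omega
    -- group conjugation identity
    have hconj : ∀ e : ℤ, ∀ w : Fin 2 → ℤ,
        (SemidirectProduct.inl (Multiplicative.ofAdd (((A ^ e : GL (Fin 2) ℤ) : Matrix (Fin 2) (Fin 2) ℤ).mulVec w)) : SolGroup A)
          = ρ ^ e * SemidirectProduct.inl (Multiplicative.ofAdd w) * (ρ ^ e)⁻¹ := by
      intro e w
      rw [← solHom_apply, SemidirectProduct.inl_aut, map_inv, hρ e]
    refine ⟨KB + 1, 16 * lr.length + 1, 2 * lx.length + 1, 1, 1, by omega, by omega, by omega, by omega, by omega, ?_⟩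
    intro n
    set N : ℕ := (16 * lr.length + 1) * n + (2 * lx.length + 1) with hN
    -- the distorted element
    obtain ⟨t, hid, ht⟩ := key_elem A hAn n
    set ep : ℤ := ((4 * n : ℕ) : ℤ) with hep
    have hgl1 : (A : GL (Fin 2) ℤ) ^ ep = (A ^ 2) ^ (2 * n) := by
      rw [hep, zpow_natCast, show 4 * n = 2 * (2 * n) by ring, pow_mul]
    have hgl2 : (A : GL (Fin 2) ℤ) ^ (-ep) = ((A ^ 2)⁻¹) ^ (2 * n) := by
      rw [hep, zpow_neg, zpow_natCast, show 4 * n = 2 * (2 * n) by ring, pow_mul, inv_pow]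
    have hsum : ((A ^ ep : GL (Fin 2) ℤ) : Matrix (Fin 2) (Fin 2) ℤ).mulVec v
        + ((A ^ (-ep) : GL (Fin 2) ℤ) : Matrix (Fin 2) (Fin 2) ℤ).mulVec v = t • v := by
      rw [← Matrix.add_mulVec, hgl1, hgl2, hid, Matrix.smul_mulVec, Matrix.one_mulVec]
    have hxt : x ^ t = (ρ ^ ep * x * (ρ ^ ep)⁻¹) * (ρ ^ (-ep) * x * (ρ ^ (-ep))⁻¹) := by
      rw [hxk t, ← hsum, ofAdd_add, map_mul, hconj ep v, hconj (-ep) v, hx]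
    -- the S-word for x^t
    set lw : List (SolGroup A) := zpowWord ep lr ++ lx ++ zpowWord (-ep) lr
        ++ (zpowWord (-ep) lr ++ lx ++ zpowWord ep lr) with hlw
    have hlwW : IsWord (↑S : Set (SolGroup A)) lw :=
      isWord_append (isWord_append (isWord_append (isWord_zpowWord hlrW _) hlxW) (isWord_zpowWord hlrW _))
        (isWord_append (isWord_append (isWord_zpowWord hlrW _) hlxW) (isWord_zpowWord hlrW _))
    have hlwP : lw.prod = x ^ t := by
      rw [hlw]
      simp only [List.prod_append, prod_zpowWord, hlrP, hlxP]
      rw [hxt]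
      group
    have hlwL : lw.length = 16 * n * lr.length + 2 * lx.length := by
      rw [hlw]
      simp only [List.length_append, length_zpowWord]
      have : ep.natAbs = 4 * n := by rw [hep]; omega
      have h2 : (-ep).natAbs = 4 * n := by rw [Int.natAbs_neg, this]
      rw [this, h2]
      ring
    have hwlS : wordLength (↑S : Set (SolGroup A)) (x ^ t) ≤ N := by
      have := wordLength_le hlwW hlwP
      rw [hlwL] at this
      apply le_trans this
      rw [hN]
      nlinarith [Nat.zero_le (n * lr.length)]
    have hxtB : x ^ t ∈ Subgroup.closure (↑B : Set (SolGroup A)) := by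
      rw [hB]
      exact Subgroup.mem_zpowers_iff.mpr ⟨t, rfl⟩
    -- membership in distortion set
    set m0 : ℕ := wordLength (↑B : Set (SolGroup A)) (x ^ t) with hm0
    have hmem : m0 ∈ {m : ℕ | ∃ g ∈ Subgroup.closure (↑B : Set (SolGroup A)),
        wordLength (↑B : Set (SolGroup A)) g = m ∧ wordLength (↑S : Set (SolGroup A)) g ≤ N} :=
      ⟨x ^ t, hxtB, rfl, hwlS⟩
    have hle : m0 ≤ distortion (↑S : Set (SolGroup A)) (↑B : Set (SolGroup A)) N := by
      apply le_csSup
      · exact ⟨U N, fun m hm => hBdd N m hm⟩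
      · exact hmem
    -- lower bound on m0
    obtain ⟨l, hlW, hlP, hlL⟩ := exists_min_word hxtB
    obtain ⟨k, hk1, hk2⟩ := hext l hlW
    have hkt : k = t := hxinj k t (by rw [← hk1, hlP])
    have htabs : 2 ^ (n + 1) ≤ t.natAbs := by
      have ht0 : (0:ℤ) ≤ t := le_trans (by positivity) ht
      have : ((2 ^ (n+1) : ℕ) : ℤ) ≤ (t.natAbs : ℤ) := by
        rw [Int.natAbs_of_nonneg ht0]
        push_cast
        exact_mod_cast ht
      exact_mod_cast this
    have hm0KB : 2 ^ (n + 1) ≤ m0 * KB := by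
      rw [hkt] at hk2
      rw [hm0, ← hlL]
      omega
    -- conclude
    have final : 2 ^ n ≤ (KB + 1) * distortion (↑S : Set (SolGroup A)) (↑B : Set (SolGroup A)) N := by
      calc 2 ^ n ≤ 2 ^ (n + 1) := Nat.pow_le_pow_right (by omega) (by omega)
        _ ≤ m0 * KB := hm0KB
        _ ≤ distortion (↑S : Set (SolGroup A)) (↑B : Set (SolGroup A)) N * KB :=
            Nat.mul_le_mul_right _ hle
        _ ≤ distortion (↑S : Set (SolGroup A)) (↑B : Set (SolGroup A)) N * (KB + 1) :=
            Nat.mul_le_mul_left _ (Nat.le_succ _)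
        _ = (KB + 1) * distortion (↑S : Set (SolGroup A)) (↑B : Set (SolGroup A)) N := by ring
    calc (2:ℕ) ^ n ≤ (KB + 1) * distortion (↑S : Set (SolGroup A)) (↑B : Set (SolGroup A)) N := final
      _ ≤ (KB + 1) * distortion (↑S : Set (SolGroup A)) (↑B : Set (SolGroup A)) N + 1 * n + 1 := by omega
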